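/- Let q₀ be the unique real solution of (3/2)q + (1/2)q³ = −1/10, and let Ã₀ be the real 4×4 matrix with rows (0, 1, 0, 0), (−2 − (3/2)q₀², −0.3, 1, 0.3), (0, 0, 0, 1), (1, 0.3, −2, −0.6). Then every complex eigenvalue μ of Ã₀ satisfies Re μ < 0 and Im μ ≠ 0; i.e., the spectrum consists of two complex-conjugate pairs of eigenvalues with negative real parts, so the equilibrium is hyperbolic and asymptotically stable. -/

import Mathlib

open Matrix

/-- The linearization `Ã₀` of the Shaw–Pierre system with friction at its equilibrium
`x₀⁺ = (q₀, 0, q₀/2, 0)`. -/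
noncomputable def Atilde (q0 : ℝ) : Matrix (Fin 4) (Fin 4) ℝ :=
  !![0, 1, 0, 0;
     -2 - (3 / 2) * q0 ^ 2, -0.3, 1, 0.3;
     0, 0, 0, 1;
     1, 0.3, -2, -0.6]

/-- No real root of the characteristic polynomial. -/
lemma aux_no_real_root (t x : ℝ) (ht : 0 ≤ t)
    (h : x^4 + 9/10*x^3 + (209/100 + (2+t))*x^2 + 3/5*(2+t)*x + (2*(2+t) - 1) = 0) :
    False := by
  nlinarith [sq_nonneg (x^2 + 9/20*x), sq_nonneg (x + 1/6), sq_nonneg x,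
    mul_nonneg ht (sq_nonneg (x + 3/10)), ht]

/-- Hurwitz-type contradiction: no root with nonnegative real part and nonzero
imaginary part. -/
lemma aux_hurwitz (t x y : ℝ) (ht : 0 ≤ t) (hx : 0 ≤ x)
    (hre : x^4 - 6*x^2*y^2 + y^4 + 9/10*(x^3-3*x*y^2)
        + (209/100+(2+t))*(x^2-y^2) + 3/5*(2+t)*x + (2*(2+t)-1) = 0)
    (hJ : 4*x^3 - 4*x*y^2 + 9/10*(3*x^2 - y^2) + 2*(209/100+(2+t))*x + 3/5*(2+t) = 0) :
    False := by
  have hQ : (-342/625 : ℝ) + (-1143/5000)*t + (-9/50)*t^2 + (-522729/50000)*x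
      + (-162/125)*x*t + (-9/5)*x*t^2 + (-124339/2500)*x^2 + (-234/25)*x^2*t
      + (-4)*x^2*t^2 + (-15453/125)*x^3 + (-144/5)*x^3*t + (-4244/25)*x^4
      + (-32)*x^4*t + (-432/5)*x^5 + (-64)*x^6 = 0 := by
    linear_combination (4*x+9/10)^2 * hre + ((4*x+9/10)*y^2
      + (6/5 + 3/5*t + 409/50*x + 2*x*t + 27/10*x^2 + 4*x^3)
      + (-409/100 - t - 27/10*x - 6*x^2)*(4*x+9/10)) * hJ
  nlinarith [hQ, mul_nonneg ht ht, mul_nonneg hx hx, mul_nonneg hx ht,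
    mul_nonneg (mul_nonneg hx hx) hx, mul_nonneg (mul_nonneg hx hx) ht,
    mul_nonneg (mul_nonneg hx ht) ht,
    mul_nonneg (mul_nonneg (mul_nonneg hx hx) hx) hx,
    mul_nonneg (mul_nonneg (mul_nonneg hx hx) hx) ht,
    mul_nonneg (mul_nonneg (mul_nonneg hx hx) (mul_nonneg hx ht)) ht,
    mul_nonneg (mul_nonneg (mul_nonneg hx hx) (mul_nonneg hx hx)) hx,
    mul_nonneg (mul_nonneg (mul_nonneg hx hx) (mul_nonneg hx hx)) (mul_nonneg hx hx),
    mul_nonneg (mul_nonneg hx hx) (mul_nonneg ht ht)]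

/-- Eigenvalues satisfy the characteristic equation. -/
lemma aux_charpoly (q0 : ℝ) (μ : ℂ)
    (hμ : μ ∈ spectrum ℂ ((Atilde q0).map (Complex.ofReal))) :
    μ^4 + (9/10)*μ^3 + (209/100 + (2 + (3/2)*(q0:ℂ)^2))*μ^2
      + (3/5)*(2 + (3/2)*(q0:ℂ)^2)*μ + (2*(2 + (3/2)*(q0:ℂ)^2) - 1) = 0 := by
  rw [spectrum.mem_iff, Matrix.isUnit_iff_isUnit_det, isUnit_iff_ne_zero, not_not] at hμ
  rw [show (algebraMap ℂ (Matrix (Fin 4) (Fin 4) ℂ)) μ - (Atilde q0).map Complex.ofReal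
      = !![μ, -1, 0, 0;
           (2 + (3/2)*(q0:ℂ)^2), μ + 0.3, -1, -0.3;
           0, 0, μ, -1;
           -1, -0.3, 2, μ + 0.6] by
    ext i j
    fin_cases i <;> fin_cases j <;>
      simp [Atilde, Matrix.algebraMap_matrix_apply] <;> push_cast <;> norm_num <;> ring] at hμ
  simp [Matrix.det_succ_row_zero, Fin.sum_univ_succ, Fin.succAbove, Fin.castSucc,
    Fin.castAdd, Fin.castLE] at hμ
  linear_combination hμ

/-- Real and imaginary parts of the characteristic equation. -/
lemma aux_reim (K x y : ℝ) (μ : ℂ)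
    (hp : μ^4 + (9/10)*μ^3 + (209/100 + (K:ℂ))*μ^2 + (3/5)*(K:ℂ)*μ + (2*(K:ℂ) - 1) = 0)
    (hx : μ.re = x) (hy : μ.im = y) :
    (x^4 - 6*x^2*y^2 + y^4 + 9/10*(x^3-3*x*y^2) + (209/100+K)*(x^2-y^2) + 3/5*K*x + (2*K-1) = 0)
    ∧ (y * (4*x^3 - 4*x*y^2 + 9/10*(3*x^2 - y^2) + 2*(209/100+K)*x + 3/5*K) = 0) := by
  have hμ : μ = Complex.ofReal x + Complex.ofReal y * Complex.I := by
    rw [← hx, ← hy]; exact (Complex.re_add_im μ).symm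
  rw [hμ] at hp
  have h0 := Complex.ext_iff.mp hp
  simp only [Complex.add_re, Complex.add_im, Complex.mul_re, Complex.mul_im,
    Complex.ofReal_re, Complex.ofReal_im, Complex.I_re, Complex.I_im,
    Complex.sub_re, Complex.sub_im, Complex.one_re, Complex.one_im,
    Complex.zero_re, Complex.zero_im, pow_succ, pow_zero, one_mul,
    Complex.re_ofNat, Complex.im_ofNat, Complex.div_re, Complex.div_im,
    Complex.normSq_apply] at h0
  obtain ⟨h1, h2⟩ := h0
  norm_num at h1 h2
  constructor
  · linear_combination h1
  · linear_combination h2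

/-- For `δ = 1/10`, with `q₀` the unique real solution of `(3/2)q + (1/2)q³ = −1/10`,
every complex eigenvalue `μ` of `Ã₀` satisfies `Re μ < 0` and `Im μ ≠ 0`: the spectrum
consists of complex-conjugate pairs with negative real parts, so the equilibrium is
hyperbolic and asymptotically stable. -/
theorem Atilde_spectrum_stable (q0 : ℝ)
    (hq : (3 / 2) * q0 + (1 / 2) * q0 ^ 3 = -(1 / 10)) :
    ∀ μ ∈ spectrum ℂ ((Atilde q0).map (Complex.ofReal)), μ.re < 0 ∧ μ.im ≠ 0 := by
  intro μ hμ
  have hp := aux_charpoly q0 μ hμ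
  set t : ℝ := (3/2) * q0 ^ 2 with ht_def
  have ht : 0 ≤ t := by positivity
  have hpK : μ^4 + (9/10)*μ^3 + (209/100 + ((2+t : ℝ):ℂ))*μ^2
      + (3/5)*((2+t : ℝ):ℂ)*μ + (2*((2+t : ℝ):ℂ) - 1) = 0 := by
    have hcast : ((t:ℝ):ℂ) = 3/2*(q0:ℂ)^2 := by rw [ht_def]; push_cast; ring
    push_cast
    linear_combination hp + (μ^2 + 3/5*μ + 2) * hcast
  obtain ⟨hre, him⟩ := aux_reim (2+t) μ.re μ.im μ hpK rfl rfl
  have hy : μ.im ≠ 0 := by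
    intro hy0
    rw [hy0] at hre
    exact aux_no_real_root t μ.re ht (by linear_combination hre)
  refine ⟨?_, hy⟩
  by_contra hx
  push_neg at hx
  have hJ : 4*μ.re^3 - 4*μ.re*μ.im^2 + 9/10*(3*μ.re^2 - μ.im^2)
      + 2*(209/100+(2+t))*μ.re + 3/5*(2+t) = 0 :=
    (mul_eq_zero.mp him).resolve_left hy
  exact aux_hurwitz t μ.re μ.im ht hx hre hJ
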